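/- (Cartan's Lemma.) Let K be a field, V a K-vector space, and v : Fin n → V a linearly independent family. Suppose w : Fin n → V satisfies Σ_{i} ι(v i) * ι(w i) = 0 in the exterior algebra of V over K, where ι is the canonical embedding of V into its exterior algebra and * is the algebra multiplication (so ι(a)*ι(b) represents a ∧ b). Then there exists a symmetric matrix of scalars a : Fin n → Fin n → K (a i j = a j i) such that w i = Σ_j (a i j) • (v j) for every i. -/

import Mathlib

open ExteriorAlgebra in
/-- The alternating 2-form `(x, y) ↦ f x * g y - f y * g x`. -/
private def wedgeForm {K : Type*} [Field K] {V : Type*} [AddCommGroup V] [Module K V]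
    (f g : V →ₗ[K] K) : V [⋀^Fin 2]→ₗ[K] K where
  toFun x := f (x 0) * g (x 1) - f (x 1) * g (x 0)
  map_update_add' x i a b := by
    fin_cases i <;> simp [Function.update, Fin.ext_iff] <;> ring
  map_update_smul' x i c a := by
    fin_cases i <;> simp [Function.update, Fin.ext_iff] <;> ring
  map_eq_zero_of_eq' x i j hx hij := by
    fin_cases i <;> fin_cases j <;> simp_all

open ExteriorAlgebra in
private lemma lift_wedge {K : Type*} [Field K] {V : Type*} [AddCommGroup V] [Module K V]
    (f g : V →ₗ[K] K) (x y : V) :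
    liftAlternating (R := K) (M := V) (N := K)
      (fun i => if h : i = 2 then h ▸ wedgeForm f g else 0) (ι K x * ι K y)
      = f x * g y - f y * g x := by
  rw [liftAlternating_ι_mul, liftAlternating_ι]
  simp [wedgeForm]

open ExteriorAlgebra in
private lemma cartan_aux {K : Type*} [Field K] {V : Type*} [AddCommGroup V] [Module K V]
    {n : ℕ} (v w : Fin n → V)
    (h : ∑ i, ι K (v i) * ι K (w i) = 0) (f g : V →ₗ[K] K) :
    ∑ i, (f (v i) * g (w i) - f (w i) * g (v i)) = 0 := by
  have := congrArg (liftAlternating (R := K) (M := V) (N := K)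
      (fun i => if h : i = 2 then h ▸ wedgeForm f g else 0)) h
  rw [map_sum, map_zero] at this
  simpa [lift_wedge] using this

/-- Cartan's Lemma: if `v : Fin n → V` is linearly independent and
`Σ_i v i ∧ w i = 0` in the exterior algebra, then `w i = Σ_j a i j • v j`
for a symmetric matrix of scalars `a`. -/
theorem cartan_lemma
    {K : Type*} [Field K] {V : Type*} [AddCommGroup V] [Module K V]
    {n : ℕ} (v : Fin n → V) (hv : LinearIndependent K v)
    (w : Fin n → V)
    (h : ∑ i, ExteriorAlgebra.ι K (v i) * ExteriorAlgebra.ι K (w i) = 0) :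
    ∃ a : Fin n → Fin n → K, (∀ i j, a i j = a j i) ∧
      ∀ i, w i = ∑ j, a i j • v j := by
  classical
  have aux := cartan_aux v w h
  have hinj : Function.Injective v := hv.injective
  have hs : LinearIndepOn K id (Set.range v) := (linearIndepOn_id_range_iff hv.injective).mpr hv
  set B := Module.Basis.extend hs with hB
  set E : Fin n → hs.extend (Set.subset_univ _) :=
    fun i => ⟨v i, hs.subset_extend _ ⟨i, rfl⟩⟩ with hEdef
  have hE : Function.Injective E := fun i j hij => hinj (congrArg Subtype.val hij)
  have hcv : ∀ (t) (i), B.coord t (v i) = if E i = t then 1 else 0 := by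
    intro t i
    have : v i = B (E i) := (Module.Basis.extend_apply_self hs (E i)).symm
    rw [Module.Basis.coord_apply, this, Module.Basis.repr_self, Finsupp.single_apply]
  have key : ∀ s t, ∑ i, B.coord s (v i) * B.coord t (w i)
      = ∑ i, B.coord s (w i) * B.coord t (v i) := by
    intro s t
    have := aux (B.coord s) (B.coord t)
    rw [Finset.sum_sub_distrib, sub_eq_zero] at this
    exact this
  have keyL : ∀ (i t), B.coord t (w i) = ∑ k, B.coord (E i) (w k) * B.coord t (v k) := by
    intro i t
    rw [← key (E i) t]
    rw [Finset.sum_eq_single i]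
    · rw [hcv, if_pos rfl, one_mul]
    · intro k _ hk
      rw [hcv, if_neg (fun hc => hk (hE hc)), zero_mul]
    · simp
  have claim1 : ∀ (i) (t), t ∉ Set.range E → B.coord t (w i) = 0 := by
    intro i t ht
    rw [keyL i t]
    apply Finset.sum_eq_zero
    intro k _
    rw [hcv, if_neg (fun hc => ht ⟨k, hc⟩), mul_zero]
  refine ⟨fun i j => B.coord (E j) (w i), ?_, ?_⟩
  · intro i j
    dsimp only
    rw [keyL i (E j), Finset.sum_eq_single j]
    · rw [hcv, if_pos rfl, mul_one]
    · intro k _ hk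
      rw [hcv, if_neg (fun hc => hk (hE hc)), mul_zero]
    · simp
  · intro i
    apply B.repr.injective
    ext t
    rw [map_sum]
    simp only [map_smul]
    rw [show (B.repr (w i)) t = B.coord t (w i) from rfl]
    by_cases ht : t ∈ Set.range E
    · obtain ⟨j₀, rfl⟩ := ht
      rw [Finset.sum_apply', Finset.sum_eq_single j₀]
      · rw [Finsupp.smul_apply, show (B.repr (v j₀)) (E j₀) = B.coord (E j₀) (v j₀) from rfl,
          hcv, if_pos rfl, smul_eq_mul, mul_one]
      · intro k _ hk
        rw [Finsupp.smul_apply, show (B.repr (v k)) (E j₀) = B.coord (E j₀) (v k) from rfl,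
          hcv, if_neg (fun hc => hk (hE hc)), smul_zero]
      · simp
    · rw [claim1 i t ht, Finset.sum_apply']
      apply (Finset.sum_eq_zero _).symm
      intro k _
      rw [Finsupp.smul_apply, show (B.repr (v k)) t = B.coord t (v k) from rfl,
        hcv, if_neg (fun hc => ht ⟨k, hc⟩), smul_zero]
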